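/- Let R be a domain, n ≥ 1, B = R[x₁^{±1},…,xₙ^{±1}] the Laurent polynomial ring in n variables over R, and A an R-subalgebra of B. Suppose there exists w ∈ ℤⁿ such that the monomial x^w belongs to A and the monomials x^{w+eᵢ} belong to A for all i = 1,…,n, where eᵢ denotes the i-th standard basis vector of ℤⁿ. Then A is quasi-factorially closed in B. -/

import Mathlib

section Aux

open AddMonoidAlgebra Finsupp

variable {R : Type*} [CommRing R] [IsDomain R] {n : ℕ}

local notation "G" => (Fin n → ℤ)
local notation "B" => AddMonoidAlgebra R (Fin n → ℤ)

lemma of'_add (x y : Fin n → ℤ) :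
    AddMonoidAlgebra.of' R (Fin n → ℤ) (x + y)
      = AddMonoidAlgebra.of' R (Fin n → ℤ) x * AddMonoidAlgebra.of' R (Fin n → ℤ) y := by
  simp [AddMonoidAlgebra.of'_apply, AddMonoidAlgebra.single_mul_single]

lemma of'_zero' : AddMonoidAlgebra.of' R (Fin n → ℤ) 0 = 1 := by
  simp [AddMonoidAlgebra.of'_apply]; rfl

lemma of'_nsmul (k : ℕ) (x : Fin n → ℤ) :
    AddMonoidAlgebra.of' R (Fin n → ℤ) (k • x)
      = (AddMonoidAlgebra.of' R (Fin n → ℤ) x) ^ k := by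
  induction k with
  | zero => simpa using of'_zero'
  | succ k ih => rw [succ_nsmul, of'_add, ih, pow_succ]

/-- monomial unit -/
noncomputable def monUnit (c : Fin n → ℤ) : (AddMonoidAlgebra R (Fin n → ℤ))ˣ where
  val := AddMonoidAlgebra.of' R (Fin n → ℤ) c
  inv := AddMonoidAlgebra.of' R (Fin n → ℤ) (-c)
  val_inv := by rw [← of'_add]; simpa using of'_zero'
  inv_val := by rw [← of'_add]; simpa using of'_zero'

set_option linter.unusedSectionVars false

lemma of'_sum {ι : Type*} (s : Finset ι) (f : ι → (Fin n → ℤ)) :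
    AddMonoidAlgebra.of' R (Fin n → ℤ) (∑ i ∈ s, f i)
      = ∏ i ∈ s, AddMonoidAlgebra.of' R (Fin n → ℤ) (f i) := by
  classical
  induction s using Finset.induction with
  | empty => simpa using of'_zero'
  | insert _ _ h ih => rw [Finset.sum_insert h, Finset.prod_insert h, of'_add, ih]

lemma key (A : Subalgebra R (AddMonoidAlgebra R (Fin n → ℤ))) (w : Fin n → ℤ)
    (hw : AddMonoidAlgebra.of' R (Fin n → ℤ) w ∈ A)
    (hwi : ∀ i : Fin n, AddMonoidAlgebra.of' R (Fin n → ℤ) (w + Pi.single i (1 : ℤ)) ∈ A)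
    (N : ℕ) (m : Fin n → ℕ) (hm : ∑ i, m i ≤ N) :
    AddMonoidAlgebra.of' R (Fin n → ℤ) ((N : ℤ) • w + fun i => (m i : ℤ)) ∈ A := by
  have hsingle : (∑ i, m i • (Pi.single i (1 : ℤ) : Fin n → ℤ)) = fun i => (m i : ℤ) := by
    funext j
    simp [Finset.sum_apply, Pi.single_apply]
  have hexp : (N : ℤ) • w + (fun i => (m i : ℤ))
      = (N - ∑ i, m i) • w + ∑ i, m i • (w + Pi.single i (1 : ℤ)) := by
    have h2 : ∑ i, m i • (w + Pi.single i (1 : ℤ))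
        = (∑ i, m i) • w + ∑ i, m i • (Pi.single i (1 : ℤ) : Fin n → ℤ) := by
      simp [smul_add, Finset.sum_add_distrib, Finset.sum_smul]
    rw [h2, hsingle, ← add_assoc, ← add_smul]
    congr 2
    omega
  rw [hexp, of'_add, of'_nsmul, of'_sum]
  exact A.mul_mem (A.pow_mem hw _)
    (A.prod_mem fun i _ => by rw [of'_nsmul]; exact A.pow_mem (hwi i) _)

lemma shift (A : Subalgebra R (AddMonoidAlgebra R (Fin n → ℤ))) (w : Fin n → ℤ)
    (hw : AddMonoidAlgebra.of' R (Fin n → ℤ) w ∈ A)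
    (hwi : ∀ i : Fin n, AddMonoidAlgebra.of' R (Fin n → ℤ) (w + Pi.single i (1 : ℤ)) ∈ A)
    (a : AddMonoidAlgebra R (Fin n → ℤ)) (ha : a ≠ 0) :
    ∃ c : Fin n → ℤ, AddMonoidAlgebra.of' R (Fin n → ℤ) c * a ∈ A := by
  classical
  have hS : a.coeff.support.Nonempty := Finsupp.support_nonempty_iff.2 (mt AddMonoidAlgebra.coeff_eq_zero.1 ha)
  set t : Fin n → ℤ := fun i => (a.coeff.support.image (fun α => α i)).min' (hS.image _) with ht
  have htle : ∀ α ∈ a.coeff.support, ∀ i, t i ≤ α i := fun α hα i =>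
    Finset.min'_le _ _ (Finset.mem_image_of_mem _ hα)
  set N : ℕ := ∑ α ∈ a.coeff.support, ∑ i, (α i - t i).toNat with hN
  refine ⟨(N : ℤ) • w - t, ?_⟩
  have hdecomp : a = ∑ α ∈ a.coeff.support, AddMonoidAlgebra.single α (a.coeff α) := (AddMonoidAlgebra.sum_coeff_single a).symm
  rw [hdecomp, Finset.mul_sum]
  refine A.sum_mem fun α hα => ?_
  have hmul : AddMonoidAlgebra.of' R (Fin n → ℤ) ((N : ℤ) • w - t) * AddMonoidAlgebra.single α (a.coeff α)
      = a.coeff α • AddMonoidAlgebra.of' R (Fin n → ℤ) (((N : ℤ) • w - t) + α) := by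
    rw [AddMonoidAlgebra.of'_apply, AddMonoidAlgebra.of'_apply, AddMonoidAlgebra.single_mul_single,
      AddMonoidAlgebra.smul_single', one_mul, mul_one]
  rw [hmul]
  refine A.smul_mem ?_ _
  have hexp : ((N : ℤ) • w - t) + α = (N : ℤ) • w + fun i => (((α i - t i).toNat : ℤ)) := by
    funext j
    have := htle α hα j
    simp only [Pi.add_apply, Pi.sub_apply, Pi.smul_apply, smul_eq_mul]
    clear_value t N
    clear hN ht hmul hdecomp htle hS hw hwi hα ha
    omega
  rw [hexp]
  exact key A w hw hwi N _ (Finset.single_le_sum (f := fun α => ∑ i, (α i - t i).toNat)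
    (fun _ _ => Nat.zero_le _) hα)

end Aux


/-- An `R`-subalgebra `A` of `B` is quasi-factorially closed (qfc) in `B`. -/
def IsQfc {R B : Type*} [CommSemiring R] [CommRing B] [Algebra R B] (A : Subalgebra R B) : Prop :=
  ∀ a b : B, a ≠ 0 → b ≠ 0 → a * b ∈ A →
    ∃ u v : Bˣ, (u : B) * a ∈ A ∧ (v : B) * b ∈ A

/-- If there is `w ∈ ℤⁿ` such that the monomials `x^w` and `x^{w+eᵢ}` (for all `i`) belong
to `A`, then `A` is qfc in `B = R[x₁^{±1},…,xₙ^{±1}]`. -/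
theorem isQfc_of_monomials (R : Type*) [CommRing R] [IsDomain R] (n : ℕ) (hn : 1 ≤ n)
    (A : Subalgebra R (AddMonoidAlgebra R (Fin n → ℤ)))
    (w : Fin n → ℤ)
    (hw : AddMonoidAlgebra.of' R (Fin n → ℤ) w ∈ A)
    (hwi : ∀ i : Fin n, AddMonoidAlgebra.of' R (Fin n → ℤ) (w + Pi.single i (1 : ℤ)) ∈ A) :
    IsQfc A := by
  intro a b ha hb _
  obtain ⟨c, hc⟩ := shift A w hw hwi a ha
  obtain ⟨d, hd⟩ := shift A w hw hwi b hb
  exact ⟨monUnit c, monUnit d, hc, hd⟩
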